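/- If (X_n)_{n∈ℤ} is a strictly stationary real-valued process with CDF F, then there exists a strictly stationary process (U_n)_{n∈ℤ} with values in (0,1), each U_n uniformly distributed on (0,1), such that (F⁻¹(U_n))_{n∈ℤ} has the same distribution (as a process) as (X_n)_{n∈ℤ}. -/

import Mathlib

open MeasureTheory Set
open Filter
open scoped ENNReal

noncomputable section

namespace StatAux

/-- A set `T ⊆ ℝ` which is null below each of its points and bounded above is null. -/
lemma null_of_null_inter_Iic (m : Measure ℝ) (T : Set ℝ)
    (hT : ∀ x ∈ T, m (T ∩ Iic x) = 0) (hb : BddAbove T) : m T = 0 := by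
  rcases T.eq_empty_or_nonempty with rfl | hne
  · simp
  set b := sSup T with hbdef
  by_cases hbT : b ∈ T
  · have : T = T ∩ Iic b := by
      apply (inter_eq_left.2 ?_).symm
      exact fun x hx => le_csSup hb hx
    rw [this]; exact hT b hbT
  · have hsub : T ⊆ ⋃ n : ℕ, T ∩ Iic (b - 1 / (n + 1)) := by
      intro x hx
      have hxb : x < b := lt_of_le_of_ne (le_csSup hb hx) (fun h => hbT (h ▸ hx))
      obtain ⟨n, hn⟩ := exists_nat_one_div_lt (sub_pos.2 hxb)
      exact mem_iUnion.2 ⟨n, hx, by simp only [mem_Iic]; linarith⟩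
    refine measure_mono_null hsub (measure_iUnion_null fun n => ?_)
    have hlt : b - 1 / (n + 1 : ℝ) < b := by
      have : (0:ℝ) < 1 / (n + 1) := by positivity
      linarith
    obtain ⟨y, hyT, hy⟩ := exists_lt_of_lt_csSup hne hlt
    refine measure_mono_null (fun x hx => ?_) (hT y hyT)
    exact ⟨hx.1, hx.2.trans hy.le⟩

lemma null_Iic_null (m : Measure ℝ) :
    MeasurableSet {x : ℝ | m (Iic x) = 0} ∧ m {x : ℝ | m (Iic x) = 0} = 0 := by
  set A := {x : ℝ | m (Iic x) = 0} with hA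
  have hlower : IsLowerSet A := fun x y hyx hx =>
    measure_mono_null (Iic_subset_Iic.2 hyx) hx
  refine ⟨hlower.ordConnected.measurableSet, ?_⟩
  by_cases hb : BddAbove A
  · exact null_of_null_inter_Iic m A (fun x hx => measure_mono_null inter_subset_right hx) hb
  · have h1 : ∀ y : ℝ, m (Iic y) = 0 := by
      intro y
      obtain ⟨x, hxA, hyx⟩ := not_bddAbove_iff.1 hb y
      exact measure_mono_null (Iic_subset_Iic.2 hyx.le) hxA
    have : m univ = 0 := by
      have : (univ : Set ℝ) ⊆ ⋃ n : ℕ, Iic (n : ℝ) := by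
        intro x _
        obtain ⟨n, hn⟩ := exists_nat_ge x
        exact mem_iUnion.2 ⟨n, hn⟩
      exact measure_mono_null this (measure_iUnion_null fun n => h1 n)
    exact measure_mono_null (subset_univ _) this

lemma null_Ici_null (m : Measure ℝ) :
    MeasurableSet {x : ℝ | m (Ici x) = 0} ∧ m {x : ℝ | m (Ici x) = 0} = 0 := by
  set B := {x : ℝ | m (Ici x) = 0} with hB
  have hupper : IsUpperSet B := fun x y hxy hx =>
    measure_mono_null (Ici_subset_Ici.2 hxy) hx
  refine ⟨hupper.ordConnected.measurableSet, ?_⟩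
  set m' := m.map (fun x : ℝ => -x) with hm'
  have hmeas : Measurable (fun x : ℝ => -x) := measurable_neg
  have key : ∀ x : ℝ, m' (Iic x) = m (Ici (-x)) := by
    intro x
    rw [Measure.map_apply hmeas measurableSet_Iic]
    congr 1
    ext y
    simp [neg_le]
  have hBeq : B = (fun x : ℝ => -x) ⁻¹' {x : ℝ | m' (Iic x) = 0} := by
    ext y
    simp only [mem_preimage, mem_setOf_eq, key, neg_neg, hB]
  have : m B ≤ m' {x : ℝ | m' (Iic x) = 0} := by
    rw [hBeq]; exact Measure.le_map_apply hmeas.aemeasurable _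
  simpa [(null_Iic_null m').2] using this


lemma unif_prob : IsProbabilityMeasure (volume.restrict (Ioo (0:ℝ) 1)) := by
  constructor
  rw [Measure.restrict_apply' measurableSet_Ioo]
  simp [Real.volume_Ioo]

lemma unif_apply (s : Set ℝ) :
    (volume.restrict (Ioo (0:ℝ) 1)) s = volume (s ∩ Ioo 0 1) :=
  Measure.restrict_apply' measurableSet_Ioo

lemma unif_Iic {c : ℝ} (h0 : 0 ≤ c) (h1 : c ≤ 1) :
    volume (Iic c ∩ Ioo (0:ℝ) 1) = ENNReal.ofReal c := by
  apply le_antisymm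
  · have hsub : Iic c ∩ Ioo (0:ℝ) 1 ⊆ Ioc 0 c := fun v hv => ⟨hv.2.1, hv.1⟩
    calc volume (Iic c ∩ Ioo (0:ℝ) 1) ≤ volume (Ioc 0 c) := measure_mono hsub
      _ = ENNReal.ofReal c := by rw [Real.volume_Ioc, sub_zero]
  · have hsub : Ioo (0:ℝ) c ⊆ Iic c ∩ Ioo 0 1 :=
      fun v hv => ⟨hv.2.le, hv.1, lt_of_lt_of_le hv.2 h1⟩
    calc ENNReal.ofReal c = volume (Ioo (0:ℝ) c) := by rw [Real.volume_Ioo, sub_zero]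
      _ ≤ _ := measure_mono hsub


lemma flat_bad_null (m : Measure ℝ) [IsFiniteMeasure m] :
    ∃ D : Set ℝ, MeasurableSet D ∧ m D = 0 ∧
      ∀ x : ℝ, x ∉ D → m {x} = 0 → ∀ t, t < x → m (Ioc t x) ≠ 0 := by
  classical
  set E := {x : ℝ | ∃ t, t < x ∧ m (Ioc t x) = 0} with hE
  set tf : ℝ → ℝ := fun x =>
    if h : ∃ t, t < x ∧ m (Ioc t x) = 0 then h.choose else x - 1 with htf
  have htf1 : ∀ x ∈ E, tf x < x ∧ m (Ioc (tf x) x) = 0 := by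
    intro x hx
    have hx' : ∃ t, t < x ∧ m (Ioc t x) = 0 := hx
    simp only [htf]
    rw [dif_pos hx']
    exact hx'.choose_spec
  set U := ⋃ x ∈ E, Ioo (tf x) x with hU
  have hUopen : IsOpen U := isOpen_biUnion fun x _ => isOpen_Ioo
  have hUnull : m U = 0 := by
    obtain ⟨T, hTE, hTc, hTeq⟩ := TopologicalSpace.isOpen_biUnion_countable E
      (fun x => Ioo (tf x) x) (fun x _ => isOpen_Ioo)
    rw [hU, ← hTeq]
    refine (measure_biUnion_null_iff hTc).2 fun x hxT => ?_
    exact measure_mono_null Ioo_subset_Ioc_self (htf1 x (hTE hxT)).2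
  set W := E \ U with hW
  have hWc : W.Countable := by
    have key : ∀ x ∈ W, ∀ y ∈ W, x < y → Disjoint (Ioo (tf x) x) (Ioo (tf y) y) := by
      intro x hx y hy hlt
      have hxnot : x ∉ Ioo (tf y) y := fun hmem => hx.2 (mem_biUnion hy.1 hmem)
      have hxle : x ≤ tf y := by
        by_contra hgt
        push_neg at hgt
        exact hxnot ⟨hgt, hlt⟩
      refine Set.disjoint_left.2 fun z hz1 hz2 => ?_
      exact absurd ((hz1.2.trans_le hxle).trans hz2.1) (lt_irrefl z)
    refine Set.PairwiseDisjoint.countable_of_isOpen (s := fun x => Ioo (tf x) x)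
      ?_ (fun x _ => isOpen_Ioo) (fun x hx => nonempty_Ioo.2 (htf1 x hx.1).1)
    intro x hx y hy hxy
    rcases lt_or_gt_of_ne hxy with h | h
    · exact key x hx y hy h
    · exact (key y hy x hx h).symm
  set D := U ∪ {x | x ∈ W ∧ m {x} = 0} with hD
  have hWsub : {x : ℝ | x ∈ W ∧ m {x} = 0}.Countable := hWc.mono (fun x hx => hx.1)
  refine ⟨D, hUopen.measurableSet.union hWsub.measurableSet, ?_, ?_⟩
  · refine measure_union_null hUnull ?_
    have heq : {x : ℝ | x ∈ W ∧ m {x} = 0} = ⋃ x ∈ {x : ℝ | x ∈ W ∧ m {x} = 0}, {x} :=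
      (biUnion_of_singleton _).symm
    rw [heq]
    exact (measure_biUnion_null_iff hWsub).2 fun x hx => hx.2
  · intro x hxD hx0 t ht hnull
    have hxE : x ∈ E := ⟨t, ht, hnull⟩
    by_cases hxU : x ∈ U
    · exact hxD (Or.inl hxU)
    · exact hxD (Or.inr ⟨⟨hxE, hxU⟩, hx0⟩)

section Key
variable (m : Measure ℝ) [IsProbabilityMeasure m]

/-- cdf -/
def Fc (x : ℝ) : ℝ := (m (Iic x)).toReal
/-- left limit of cdf -/
def Fo (x : ℝ) : ℝ := (m (Iio x)).toReal
/-- distributional transform -/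
def G (p : ℝ × ℝ) : ℝ := Fo m p.1 + p.2 * (Fc m p.1 - Fo m p.1)

lemma Fc_mono : Monotone (Fc m) := fun x y hxy =>
  ENNReal.toReal_mono (measure_ne_top _ _) (measure_mono (Iic_subset_Iic.2 hxy))

lemma Fo_mono : Monotone (Fo m) := fun x y hxy =>
  ENNReal.toReal_mono (measure_ne_top _ _) (measure_mono (Iio_subset_Iio hxy))

lemma Fc_meas : Measurable (Fc m) := (Fc_mono m).measurable
lemma Fo_meas : Measurable (Fo m) := (Fo_mono m).measurable

lemma G_meas : Measurable (G m) :=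
  ((Fo_meas m).comp measurable_fst).add
    (measurable_snd.mul (((Fc_meas m).comp measurable_fst).sub
      ((Fo_meas m).comp measurable_fst)))

lemma ofReal_Fc (x : ℝ) : ENNReal.ofReal (Fc m x) = m (Iic x) :=
  ENNReal.ofReal_toReal (measure_ne_top _ _)

lemma ofReal_Fo (x : ℝ) : ENNReal.ofReal (Fo m x) = m (Iio x) :=
  ENNReal.ofReal_toReal (measure_ne_top _ _)

lemma Fo_nonneg (x : ℝ) : 0 ≤ Fo m x := ENNReal.toReal_nonneg
lemma Fc_nonneg (x : ℝ) : 0 ≤ Fc m x := ENNReal.toReal_nonneg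

lemma Fo_le_Fc (x : ℝ) : Fo m x ≤ Fc m x :=
  ENNReal.toReal_mono (measure_ne_top _ _) (measure_mono Iio_subset_Iic_self)

lemma Fc_le_one (x : ℝ) : Fc m x ≤ 1 := by
  have h := ENNReal.toReal_mono (by simp : (1:ENNReal) ≠ ⊤) (prob_le_one (μ := m) (s := Iic x))
  simpa [Fc] using h

lemma Fc_lt_of_Iio_lt {x y : ℝ} (h : x < y) : Fc m x ≤ Fo m y :=
  ENNReal.toReal_mono (measure_ne_top _ _) (measure_mono fun t ht => lt_of_le_of_lt ht h)


lemma key : (m.prod (volume.restrict (Ioo (0:ℝ) 1))).map (G m)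
    = volume.restrict (Ioo (0:ℝ) 1) := by
  haveI hprob : IsProbabilityMeasure (volume.restrict (Ioo (0:ℝ) 1)) := unif_prob
  set ν := volume.restrict (Ioo (0:ℝ) 1) with hν
  haveI : IsProbabilityMeasure ((m.prod ν).map (G m)) :=
    Measure.isProbabilityMeasure_map (G_meas m).aemeasurable
  refine Measure.ext_of_Iic _ _ fun u => ?_
  rw [Measure.map_apply (G_meas m) measurableSet_Iic,
    Measure.prod_apply ((G_meas m) measurableSet_Iic)]
  have hsec : ∀ x : ℝ, (Prod.mk x ⁻¹' (G m ⁻¹' Iic u))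
      = {v : ℝ | Fo m x + v * (Fc m x - Fo m x) ≤ u} := fun x => rfl
  rcases le_or_gt u 0 with hu0 | hu0
  · -- u ≤ 0
    have hae : (fun x => ν (Prod.mk x ⁻¹' (G m ⁻¹' Iic u))) =ᵐ[m] (fun _ => 0) := by
      rw [Filter.EventuallyEq, ae_iff]
      refine measure_mono_null (fun x hx => ?_) (null_Iic_null m).2
      simp only [mem_setOf_eq] at hx ⊢
      by_contra hxA
      apply hx
      rw [hsec, hν, unif_apply]
      convert measure_empty
      · rw [eq_empty_iff_forall_notMem]
        rintro v ⟨hvle, hv0, hv1⟩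
        simp only [mem_setOf_eq] at hvle
        have h1 : 0 ≤ Fo m x := Fo_nonneg m x
        have h2 : 0 ≤ v * (Fc m x - Fo m x) :=
          mul_nonneg hv0.le (sub_nonneg.2 (Fo_le_Fc m x))
        have hFo0 : Fo m x = 0 := by linarith
        have hmul : v * (Fc m x - Fo m x) = 0 := by linarith
        have hΔ : Fc m x - Fo m x = 0 := by
          rcases mul_eq_zero.1 hmul with h | h
          · exact absurd h (ne_of_gt hv0)
          · exact h
        have hFc0 : Fc m x = 0 := by linarith
        apply hxA
        rw [← ofReal_Fc m x, hFc0, ENNReal.ofReal_zero]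
      · infer_instance
    rw [lintegral_congr_ae hae, lintegral_zero, hν, unif_apply]
    have : Iic u ∩ Ioo (0:ℝ) 1 = ∅ := by
      rw [eq_empty_iff_forall_notMem]
      rintro v ⟨hv, hv0, hv1⟩
      exact absurd (lt_of_lt_of_le hv0 (hv.trans hu0)) (lt_irrefl _)
    rw [this, measure_empty]
  rcases le_or_gt 1 u with hu1 | hu1
  · -- 1 ≤ u
    have hone : ∀ x : ℝ, ν (Prod.mk x ⁻¹' (G m ⁻¹' Iic u)) = 1 := by
      intro x
      refine le_antisymm prob_le_one ?_
      have hsub : Ioo (0:ℝ) 1 ⊆ Prod.mk x ⁻¹' (G m ⁻¹' Iic u) := by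
        intro v hv
        rw [hsec]
        have h2 : v * (Fc m x - Fo m x) ≤ Fc m x - Fo m x :=
          mul_le_of_le_one_left (sub_nonneg.2 (Fo_le_Fc m x)) hv.2.le
        have := Fc_le_one m x
        simp only [mem_setOf_eq]; linarith
      calc (1:ℝ≥0∞) = ν (Ioo 0 1) := by
            rw [hν, unif_apply, inter_self, Real.volume_Ioo]; norm_num
        _ ≤ _ := measure_mono hsub
    rw [lintegral_congr (fun x => hone x), lintegral_one, measure_univ, hν, unif_apply]
    have : Iic u ∩ Ioo (0:ℝ) 1 = Ioo 0 1 :=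
      inter_eq_right.2 fun v hv => le_trans hv.2.le hu1
    rw [this, Real.volume_Ioo]; norm_num
  · -- 0 < u < 1
    set Q := {t : ℝ | u ≤ Fc m t} with hQdef
    obtain ⟨N, hN⟩ : ∃ N : ℝ, ENNReal.ofReal u < m (Iic N) := by
      have h := tendsto_measure_Iic_atTop (μ := m)
      rw [measure_univ] at h
      exact (h.eventually_const_lt (ENNReal.ofReal_lt_one.2 hu1)).exists
    have hQne : Q.Nonempty := by
      refine ⟨N, ?_⟩
      have h := ENNReal.toReal_mono (measure_ne_top m _) hN.le
      rwa [ENNReal.toReal_ofReal hu0.le] at h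
    have hQbdd : BddBelow Q := by
      by_contra hb
      have hge : ∀ n : ℕ, ENNReal.ofReal u ≤ m (Iic (-(n:ℝ))) := by
        intro n
        obtain ⟨t, htQ, ht⟩ := not_bddBelow_iff.1 hb (-(n:ℝ))
        calc ENNReal.ofReal u ≤ ENNReal.ofReal (Fc m t) := ENNReal.ofReal_le_ofReal htQ
          _ = m (Iic t) := ofReal_Fc m t
          _ ≤ m (Iic (-(n:ℝ))) := measure_mono (Iic_subset_Iic.2 ht.le)
      have hint := tendsto_measure_iInter_atTop (μ := m)
        (fun n : ℕ => (measurableSet_Iic (a := -(n:ℝ))).nullMeasurableSet)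
        (fun a b hab => Iic_subset_Iic.2 (neg_le_neg (Nat.cast_le.2 hab)))
        ⟨0, measure_ne_top m _⟩
      have hempty : (⋂ n : ℕ, Iic (-(n:ℝ))) = ∅ := by
        rw [eq_empty_iff_forall_notMem]
        intro x hx
        obtain ⟨n, hn⟩ := exists_nat_gt (-x)
        have := mem_iInter.1 hx n
        rw [mem_Iic] at this
        linarith
      rw [hempty, measure_empty] at hint
      have hle := ge_of_tendsto hint (Filter.Eventually.of_forall hge)
      rw [le_zero_iff] at hle
      exact (ENNReal.ofReal_pos.2 hu0).ne' hle
    set xstar := sInf Q with hxstar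
    have hFcx : u ≤ Fc m xstar := by
      have hmem : ∀ n : ℕ, ENNReal.ofReal u ≤ m (Iic (xstar + 1/(n+1))) := by
        intro n
        have hpos : (0:ℝ) < 1/((n:ℝ)+1) := by positivity
        obtain ⟨q, hqQ, hq⟩ := exists_lt_of_csInf_lt hQne
          (lt_add_of_pos_right xstar hpos)
        calc ENNReal.ofReal u ≤ ENNReal.ofReal (Fc m q) := ENNReal.ofReal_le_ofReal hqQ
          _ = m (Iic q) := ofReal_Fc m q
          _ ≤ _ := measure_mono (Iic_subset_Iic.2 hq.le)
      have hint := tendsto_measure_iInter_atTop (μ := m)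
        (fun n : ℕ => (measurableSet_Iic (a := xstar + 1/((n:ℝ)+1))).nullMeasurableSet)
        (fun a b hab => Iic_subset_Iic.2 (by
          have h1 : 1/((b:ℝ)+1) ≤ 1/((a:ℝ)+1) := by
            apply one_div_le_one_div_of_le (by positivity)
            exact_mod_cast add_le_add_left (Nat.cast_le.2 hab) 1
          linarith))
        ⟨0, measure_ne_top m _⟩
      have hiInter : (⋂ n : ℕ, Iic (xstar + 1/((n:ℝ)+1))) = Iic xstar := by
        ext x
        simp only [mem_iInter, mem_Iic]
        constructor
        · intro h
          by_contra hx
          push_neg at hx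
          obtain ⟨n, hn⟩ := exists_nat_one_div_lt (sub_pos.2 hx)
          have := h n
          linarith
        · intro h n
          have : (0:ℝ) < 1/((n:ℝ)+1) := by positivity
          linarith
      rw [hiInter] at hint
      have hle := ge_of_tendsto hint (Filter.Eventually.of_forall hmem)
      have h := ENNReal.toReal_mono (measure_ne_top m _) hle
      rwa [ENNReal.toReal_ofReal hu0.le] at h
    have hFox : Fo m xstar ≤ u := by
      have hUnion : (⋃ n : ℕ, Iic (xstar - 1/((n:ℝ)+1))) = Iio xstar := by
        ext x
        simp only [mem_iUnion, mem_Iic, mem_Iio]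
        constructor
        · rintro ⟨n, hn⟩
          have : (0:ℝ) < 1/((n:ℝ)+1) := by positivity
          linarith
        · intro h
          obtain ⟨n, hn⟩ := exists_nat_one_div_lt (sub_pos.2 h)
          exact ⟨n, by linarith⟩
      have htend := tendsto_measure_iUnion_atTop (μ := m)
        (s := fun n : ℕ => Iic (xstar - 1/((n:ℝ)+1)))
        (fun a b hab => Iic_subset_Iic.2 (by
          have h1 : 1/((b:ℝ)+1) ≤ 1/((a:ℝ)+1) := by
            apply one_div_le_one_div_of_le (by positivity)
            exact_mod_cast add_le_add_left (Nat.cast_le.2 hab) 1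
          linarith))
      rw [hUnion] at htend
      have hmem : ∀ n : ℕ, m (Iic (xstar - 1/((n:ℝ)+1))) ≤ ENNReal.ofReal u := by
        intro n
        have hpos : (0:ℝ) < 1/((n:ℝ)+1) := by positivity
        have hnotQ : xstar - 1/((n:ℝ)+1) ∉ Q := by
          intro hmemQ
          have := csInf_le hQbdd hmemQ
          rw [← hxstar] at this
          linarith
        have hFclt : Fc m (xstar - 1/((n:ℝ)+1)) < u := not_le.1 hnotQ
        rw [← ofReal_Fc]
        exact ENNReal.ofReal_le_ofReal hFclt.le
      have hle := le_of_tendsto htend (Filter.Eventually.of_forall hmem)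
      have h := ENNReal.toReal_mono ENNReal.ofReal_ne_top hle
      rwa [ENNReal.toReal_ofReal hu0.le] at h
    -- the exceptional null set
    set S := {x : ℝ | xstar < x ∧ Fo m x ≤ u ∧ Fc m x ≤ u} with hSdef
    have hSnull : m S = 0 := by
      apply null_of_null_inter_Iic m S
      · intro x hx
        have hIoc : m (Ioc xstar x) = 0 := by
          have hsplit : m (Iic xstar) + m (Ioc xstar x) = m (Iic x) := by
            rw [← measure_union (Set.Iic_disjoint_Ioc le_rfl) measurableSet_Ioc,
              Iic_union_Ioc_eq_Iic hx.1.le]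
          have h2 : m (Iic x) ≤ ENNReal.ofReal u := by
            rw [← ofReal_Fc]; exact ENNReal.ofReal_le_ofReal hx.2.2
          have h3 : ENNReal.ofReal u ≤ m (Iic xstar) := by
            rw [← ofReal_Fc]; exact ENNReal.ofReal_le_ofReal hFcx
          have h4 : m (Iic xstar) + m (Ioc xstar x) ≤ m (Iic xstar) + 0 := by
            rw [add_zero, hsplit]; exact h2.trans h3
          exact le_zero_iff.1 ((ENNReal.add_le_add_iff_left (measure_ne_top m _)).1 h4)
        refine measure_mono_null (fun y hy => ?_) hIoc
        exact ⟨hy.1.1, hy.2⟩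
      · refine ⟨N, fun x hx => ?_⟩
        by_contra hnx
        push_neg at hnx
        have h2 : m (Iic N) ≤ ENNReal.ofReal u := by
          refine le_trans (measure_mono (Iic_subset_Iic.2 hnx.le)) ?_
          rw [← ofReal_Fc]; exact ENNReal.ofReal_le_ofReal hx.2.2
        exact absurd hN (not_lt.2 h2)
    -- pointwise values of the section measure
    have hlt : ∀ x : ℝ, x < xstar → ν (Prod.mk x ⁻¹' (G m ⁻¹' Iic u)) = 1 := by
      intro x hx
      have hFcu : Fc m x < u := by
        by_contra hge
        exact absurd (csInf_le hQbdd (not_lt.1 hge)) (not_le.2 hx)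
      refine le_antisymm prob_le_one ?_
      have hsub : Ioo (0:ℝ) 1 ⊆ Prod.mk x ⁻¹' (G m ⁻¹' Iic u) := by
        intro v hv
        rw [hsec]
        have h2 : v * (Fc m x - Fo m x) ≤ Fc m x - Fo m x :=
          mul_le_of_le_one_left (sub_nonneg.2 (Fo_le_Fc m x)) hv.2.le
        simp only [mem_setOf_eq]; linarith
      calc (1:ℝ≥0∞) = ν (Ioo 0 1) := by
            rw [hν, unif_apply, inter_self, Real.volume_Ioo]; norm_num
        _ ≤ _ := measure_mono hsub
    have hgt : ∀ x : ℝ, xstar < x → x ∉ S → ν (Prod.mk x ⁻¹' (G m ⁻¹' Iic u)) = 0 := by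
      intro x hx hxS
      have hFo : u ≤ Fo m x := hFcx.trans (Fc_lt_of_Iio_lt m hx)
      rw [hsec, hν, unif_apply]
      have hempty : {v : ℝ | Fo m x + v * (Fc m x - Fo m x) ≤ u} ∩ Ioo (0:ℝ) 1 = ∅ := by
        rw [eq_empty_iff_forall_notMem]
        rintro v ⟨hvle, hv0, hv1⟩
        simp only [mem_setOf_eq] at hvle
        rcases lt_or_eq_of_le hFo with hlt' | heq
        · have : 0 ≤ v * (Fc m x - Fo m x) :=
            mul_nonneg hv0.le (sub_nonneg.2 (Fo_le_Fc m x))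
          linarith
        · have hFcgt : u < Fc m x := by
            by_contra hle'
            exact hxS ⟨hx, heq.symm.le, not_lt.1 hle'⟩
          have : 0 < v * (Fc m x - Fo m x) := mul_pos hv0 (by linarith)
          linarith
      rw [hempty, measure_empty]
    -- combine
    set cs : ℝ≥0∞ := ν (Prod.mk xstar ⁻¹' (G m ⁻¹' Iic u)) with hcs
    have hae : (fun x => ν (Prod.mk x ⁻¹' (G m ⁻¹' Iic u))) =ᵐ[m]
        (fun x => (Iio xstar).indicator (fun _ => (1:ℝ≥0∞)) x
          + ({xstar} : Set ℝ).indicator (fun _ => cs) x) := by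
      rw [Filter.EventuallyEq, ae_iff]
      refine measure_mono_null (fun x hx => ?_) hSnull
      simp only [mem_setOf_eq] at hx
      by_contra hxS
      apply hx
      rcases lt_trichotomy x xstar with h | h | h
      · rw [hlt x h, indicator_of_mem (mem_Iio.2 h),
          indicator_of_notMem (by simp [ne_of_lt h])]
        simp
      · subst h
        rw [indicator_of_notMem (by simp), indicator_of_mem (mem_singleton _), hcs, zero_add]
      · rw [hgt x h hxS, indicator_of_notMem (by simp [not_lt.2 h.le]),
          indicator_of_notMem (by simp [(ne_of_gt h)]), add_zero]
    rw [lintegral_congr_ae hae,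
      lintegral_add_left (measurable_const.indicator measurableSet_Iio),
      lintegral_indicator_const measurableSet_Iio,
      lintegral_indicator_const (measurableSet_singleton _), one_mul]
    have hRHS : ν (Iic u) = ENNReal.ofReal u := by
      rw [hν, unif_apply, unif_Iic hu0.le hu1.le]
    rw [hRHS]
    have hsplit : m (Iio xstar) + m {xstar} = m (Iic xstar) := by
      have hdisj : Disjoint (Iio xstar) ({xstar} : Set ℝ) :=
        disjoint_singleton_right.2 (by simp)
      rw [← measure_union hdisj (measurableSet_singleton _), Iio_union_right]
    by_cases hΔ : Fc m xstar = Fo m xstar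
    · have hFoeq : Fo m xstar = u := le_antisymm hFox (hΔ ▸ hFcx)
      have hIioIic : m (Iio xstar) = m (Iic xstar) := by
        rw [← ofReal_Fo, ← ofReal_Fc, hΔ]
      have hsing : m {xstar} = 0 := by
        have h2 : m (Iio xstar) + m {xstar} = m (Iio xstar) + 0 := by
          rw [add_zero, hsplit, hIioIic]
        exact (ENNReal.add_right_inj (measure_ne_top m _)).1 h2
      rw [hsing, mul_zero, add_zero, ← ofReal_Fo, hFoeq]
    · have hΔpos : 0 < Fc m xstar - Fo m xstar :=
        sub_pos.2 (lt_of_le_of_ne (Fo_le_Fc m xstar) (Ne.symm hΔ))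
      set c := (u - Fo m xstar) / (Fc m xstar - Fo m xstar) with hcdef
      have hc0 : 0 ≤ c := div_nonneg (sub_nonneg.2 hFox) hΔpos.le
      have hc1 : c ≤ 1 := (div_le_one hΔpos).2 (by linarith)
      have hseceq : {v : ℝ | Fo m xstar + v * (Fc m xstar - Fo m xstar) ≤ u} = Iic c := by
        ext v
        simp only [mem_setOf_eq, mem_Iic, hcdef, le_div_iff₀ hΔpos]
        constructor <;> intro <;> linarith
      have hcval : cs = ENNReal.ofReal c := by
        rw [hcs, hsec, hseceq, hν, unif_apply, unif_Iic hc0 hc1]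
      have hm2 : m {xstar} = ENNReal.ofReal (Fc m xstar - Fo m xstar) := by
        have h2 : m {xstar} = m (Iic xstar) - m (Iio xstar) := by
          rw [← hsplit, ENNReal.add_sub_cancel_left (measure_ne_top m _)]
        rw [h2, ENNReal.ofReal_sub _ (Fo_nonneg m xstar), ofReal_Fc, ofReal_Fo]
      rw [hcval, hm2, ← ofReal_Fo, ← ENNReal.ofReal_mul hc0,
        ← ENNReal.ofReal_add (Fo_nonneg m xstar) (by positivity)]
      congr 1
      rw [hcdef, div_mul_cancel₀ _ (ne_of_gt hΔpos)]
      ring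


lemma Iio_add_singleton (x : ℝ) : m (Iio x) + m {x} = m (Iic x) := by
  have hdisj : Disjoint (Iio x) ({x} : Set ℝ) := disjoint_singleton_right.2 (by simp)
  rw [← measure_union hdisj (measurableSet_singleton _), Iio_union_right]

lemma Qne {u : ℝ} (hu : u < 1) (hu0 : 0 ≤ u) : {t : ℝ | u ≤ Fc m t}.Nonempty := by
  obtain ⟨N, hN⟩ : ∃ N : ℝ, ENNReal.ofReal u < m (Iic N) := by
    have h := tendsto_measure_Iic_atTop (μ := m)
    rw [measure_univ] at h
    exact (h.eventually_const_lt (ENNReal.ofReal_lt_one.2 hu)).exists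
  refine ⟨N, ?_⟩
  have h := ENNReal.toReal_mono (measure_ne_top m _) hN.le
  rwa [ENNReal.toReal_ofReal hu0] at h

lemma Qbdd {u : ℝ} (hu : 0 < u) : BddBelow {t : ℝ | u ≤ Fc m t} := by
  by_contra hb
  have hge : ∀ n : ℕ, ENNReal.ofReal u ≤ m (Iic (-(n:ℝ))) := by
    intro n
    obtain ⟨t, htQ, ht⟩ := not_bddBelow_iff.1 hb (-(n:ℝ))
    calc ENNReal.ofReal u ≤ ENNReal.ofReal (Fc m t) := ENNReal.ofReal_le_ofReal htQ
      _ = m (Iic t) := ofReal_Fc m t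
      _ ≤ m (Iic (-(n:ℝ))) := measure_mono (Iic_subset_Iic.2 ht.le)
  have hint := tendsto_measure_iInter_atTop (μ := m)
    (fun n : ℕ => (measurableSet_Iic (a := -(n:ℝ))).nullMeasurableSet)
    (fun a b hab => Iic_subset_Iic.2 (neg_le_neg (Nat.cast_le.2 hab)))
    ⟨0, measure_ne_top m _⟩
  have hempty : (⋂ n : ℕ, Iic (-(n:ℝ))) = ∅ := by
    rw [eq_empty_iff_forall_notMem]
    intro x hx
    obtain ⟨n, hn⟩ := exists_nat_gt (-x)
    have := mem_iInter.1 hx n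
    rw [mem_Iic] at this
    linarith
  rw [hempty, measure_empty] at hint
  have hle := ge_of_tendsto hint (Filter.Eventually.of_forall hge)
  rw [le_zero_iff] at hle
  exact (ENNReal.ofReal_pos.2 hu).ne' hle

/-- the generalized inverse recovers `x` from the distributional transform,
for good points `x`. -/
lemma sInf_G_eq (x v : ℝ) (hA : m (Iic x) ≠ 0)
    (hflat : m {x} = 0 → ∀ t, t < x → m (Ioc t x) ≠ 0)
    (hv0 : 0 < v) (hv1 : v < 1) :
    sInf {t : ℝ | Fo m x + v * (Fc m x - Fo m x) ≤ Fc m t} = x := by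
  set s := Fo m x + v * (Fc m x - Fo m x) with hs
  have hxmem : x ∈ {t : ℝ | s ≤ Fc m t} := by
    simp only [mem_setOf_eq, hs]
    have h2 : v * (Fc m x - Fo m x) ≤ Fc m x - Fo m x :=
      mul_le_of_le_one_left (sub_nonneg.2 (Fo_le_Fc m x)) hv1.le
    linarith
  have hlb : ∀ t ∈ {t : ℝ | s ≤ Fc m t}, x ≤ t := by
    intro t hts
    simp only [mem_setOf_eq, hs] at hts
    by_contra hxt
    push_neg at hxt
    rcases eq_or_lt_of_le (Fo_le_Fc m x) with hΔ | hΔ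
    · -- continuity point
      have hsing : m {x} = 0 := by
        have hIiceq : m (Iic x) = m (Iio x) := by
          rw [← ofReal_Fc, ← ofReal_Fo, hΔ]
        have h2 : m (Iio x) + m {x} = m (Iio x) + 0 := by
          rw [add_zero, Iio_add_singleton, hIiceq]
        exact (ENNReal.add_right_inj (measure_ne_top m _)).1 h2
      have hne := hflat hsing t hxt
      have hsum : m (Iic t) + m (Ioc t x) = m (Iic x) := by
        rw [← measure_union (Iic_disjoint_Ioc le_rfl) measurableSet_Ioc,
          Iic_union_Ioc_eq_Iic hxt.le]
      have hltm : m (Iic t) < m (Iic x) := by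
        rw [← hsum]
        exact ENNReal.lt_add_right (measure_ne_top m _) hne
      have hFclt : Fc m t < Fc m x :=
        (ENNReal.toReal_lt_toReal (measure_ne_top m _) (measure_ne_top m _)).2 hltm
      have : v * (Fc m x - Fo m x) = 0 := by rw [← hΔ]; ring
      linarith
    · have h1 : Fc m t ≤ Fo m x := Fc_lt_of_Iio_lt m hxt
      have h2 : 0 < v * (Fc m x - Fo m x) := mul_pos hv0 (sub_pos.2 hΔ)
      linarith
  exact le_antisymm (csInf_le ⟨x, hlb⟩ hxmem) (le_csInf ⟨x, hxmem⟩ hlb)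

lemma G_mem_Ioo (x v : ℝ) (hx1 : m (Iic x) ≠ 0) (hx2 : m (Ici x) ≠ 0)
    (hv0 : 0 < v) (hv1 : v < 1) :
    Fo m x + v * (Fc m x - Fo m x) ∈ Ioo (0:ℝ) 1 := by
  have hΔ : 0 ≤ Fc m x - Fo m x := sub_nonneg.2 (Fo_le_Fc m x)
  constructor
  · rcases eq_or_lt_of_le (Fo_nonneg m x) with h0 | h0
    · have hFc : 0 < Fc m x := ENNReal.toReal_pos hx1 (measure_ne_top m _)
      have : 0 < v * (Fc m x - Fo m x) := mul_pos hv0 (by rw [← h0] at hΔ ⊢; linarith)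
      linarith
    · have : 0 ≤ v * (Fc m x - Fo m x) := mul_nonneg hv0.le hΔ
      linarith
  · -- Fo x < 1
    have hFo1 : Fo m x < 1 := by
      have hsum : m (Iio x) + m (Ici x) = 1 := by
        rw [← measure_union (Iio_disjoint_Ici le_rfl) measurableSet_Ici,
          Iio_union_Ici, measure_univ]
      have hlt : m (Iio x) < 1 := by
        by_contra hge
        push_neg at hge
        have h1 : m (Iio x) = 1 := le_antisymm prob_le_one hge
        rw [h1] at hsum
        have : (1:ℝ≥0∞) + m (Ici x) = 1 + 0 := by rw [add_zero, hsum]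
        exact hx2 ((ENNReal.add_right_inj (by simp)).1 this)
      have := (ENNReal.toReal_lt_toReal (measure_ne_top m _) (by simp : (1:ℝ≥0∞) ≠ ⊤)).2 hlt
      simpa [Fo] using this
    have hFc1 : Fc m x ≤ 1 := Fc_le_one m x
    nlinarith [mul_pos hv0 (sub_pos.2 hFo1)]

end Key

end StatAux

open StatAux

/-- Main theorem (one-dimensional version): for a strictly stationary real-valued process
`(X_n)_{n∈ℤ}` with CDF `F`, there is a strictly stationary process with values in `(0,1)`
and uniform one-dimensional marginals — i.e. a shift-invariant probability `μ` on `ℝ^ℤ`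
carried by `(0,1)^ℤ` with uniform marginals — whose image under the coordinatewise
generalized inverse `F⁻¹` is the law of `(X_n)`. -/
theorem stationary_process_factor_of_uniform
    (Ω : Type*) [MeasurableSpace Ω] (ℙ : Measure Ω) [IsProbabilityMeasure ℙ]
    (X : ℤ → Ω → ℝ) (hX : ∀ n, Measurable (X n))
    (hstat : (ℙ.map (fun ω => fun n : ℤ => X n ω)).map (fun x => fun n : ℤ => x (n + 1))
      = ℙ.map (fun ω => fun n : ℤ => X n ω))
    (F : ℝ → ℝ) (hF : ∀ t, F t = ((ℙ.map (X 0)) (Set.Iic t)).toReal)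
    (Finv : ℝ → ℝ) (hFinv : ∀ s, Finv s = sInf {t : ℝ | s ≤ F t}) :
    ∃ μ : Measure (ℤ → ℝ), IsProbabilityMeasure μ ∧
      μ.map (fun y => fun n : ℤ => y (n + 1)) = μ ∧
      μ {y | ∀ i : ℤ, y i ∈ Set.Ioo (0 : ℝ) 1} = 1 ∧
      (∀ n : ℤ, μ.map (fun y => y n) = volume.restrict (Set.Ioo (0 : ℝ) 1)) ∧
      μ.map (fun y => fun n : ℤ => Finv (y n)) = ℙ.map (fun ω => fun n : ℤ => X n ω) := by
  classical
  set m : Measure ℝ := ℙ.map (X 0) with hm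
  haveI hmP : IsProbabilityMeasure m := Measure.isProbabilityMeasure_map (hX 0).aemeasurable
  set ν : Measure ℝ := volume.restrict (Ioo (0:ℝ) 1) with hνdef
  haveI hνP : IsProbabilityMeasure ν := unif_prob
  set seqX : Ω → (ℤ → ℝ) := fun ω => fun n : ℤ => X n ω with hseqX
  have hseqXm : Measurable seqX := measurable_pi_lambda _ fun n => hX n
  set L : Measure (ℤ → ℝ) := ℙ.map seqX with hL
  haveI hLP : IsProbabilityMeasure L := Measure.isProbabilityMeasure_map hseqXm.aemeasurable
  set sh : (ℤ → ℝ) → (ℤ → ℝ) := fun y => fun n : ℤ => y (n + 1) with hsh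
  have hshm : Measurable sh := measurable_pi_lambda _ fun n => measurable_pi_apply _
  have hstat' : L.map sh = L := hstat
  -- marginals of L
  have hstep : ∀ n : ℤ, L.map (fun y => y (n+1)) = L.map (fun y => y n) := by
    intro n
    calc L.map (fun y => y (n+1)) = (L.map sh).map (fun y => y n) := by
          rw [Measure.map_map (measurable_pi_apply n) hshm]; rfl
      _ = L.map (fun y => y n) := by rw [hstat']
  have hzero : L.map (fun y => y (0:ℤ)) = m := by
    rw [hL, Measure.map_map (measurable_pi_apply 0) hseqXm]; rfl
  have hmarg : ∀ n : ℤ, L.map (fun y => y n) = m := by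
    intro n
    induction n using Int.induction_on with
    | zero => exact hzero
    | succ k ih => rw [hstep (k:ℤ), ih]
    | pred k ih =>
      have h1 := hstep (-(k:ℤ) - 1)
      have hco : (fun y : ℤ → ℝ => y (-(k:ℤ) - 1 + 1)) = (fun y : ℤ → ℝ => y (-(k:ℤ))) := by
        funext y; congr 1; ring
      rw [hco] at h1
      have hco2 : (fun y : ℤ → ℝ => y (-((k:ℤ) + 1))) = (fun y : ℤ → ℝ => y (-(k:ℤ) - 1)) := by
        funext y; congr 1; ring
      rw [show (-((k:ℤ) + 1)) = -(k:ℤ) - 1 by ring] at *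
      rw [← h1, ih]
  -- the process
  set Hf : (ℤ → ℝ) × ℝ → (ℤ → ℝ) := fun q => fun n : ℤ => G m (q.1 n, q.2) with hHf
  have hHfm : Measurable Hf := measurable_pi_lambda _ fun n =>
    (G_meas m).comp (((measurable_pi_apply n).comp measurable_fst).prodMk measurable_snd)
  set P2 : Measure ((ℤ → ℝ) × ℝ) := L.prod ν with hP2
  set μ0 : Measure (ℤ → ℝ) := P2.map Hf with hμ0
  haveI h1 : IsProbabilityMeasure μ0 := Measure.isProbabilityMeasure_map hHfm.aemeasurable
  -- (2) stationarity
  have h2 : μ0.map sh = μ0 := by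
    have hcomm : sh ∘ Hf = Hf ∘ (Prod.map sh (id : ℝ → ℝ)) := rfl
    rw [hμ0, Measure.map_map hshm hHfm, hcomm,
      ← Measure.map_map hHfm (hshm.prodMap measurable_id)]
    congr 1
    rw [hP2, ← Measure.map_prod_map _ _ hshm measurable_id, hstat', Measure.map_id]
  -- (3) support
  set Good : Set (ℤ → ℝ) := {y | ∀ i : ℤ, y i ∈ Ioo (0:ℝ) 1} with hGood
  have hGoodm : MeasurableSet Good := by
    have heq : Good = ⋂ i : ℤ, (fun y : ℤ → ℝ => y i) ⁻¹' (Ioo (0:ℝ) 1) := by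
      ext y; simp [hGood, mem_iInter]
    rw [heq]
    exact MeasurableSet.iInter fun i => (measurable_pi_apply i) measurableSet_Ioo
  set Abad : Set ℝ := {x : ℝ | m (Iic x) = 0} ∪ {x : ℝ | m (Ici x) = 0} with hAbad
  have hAbadm : MeasurableSet Abad := (null_Iic_null m).1.union (null_Ici_null m).1
  have hAbadnull : m Abad = 0 := measure_union_null (null_Iic_null m).2 (null_Ici_null m).2
  obtain ⟨D, hDm, hDnull, hDprop⟩ := flat_bad_null m
  set Abad2 : Set ℝ := Abad ∪ D with hAbad2
  have hAbad2m : MeasurableSet Abad2 := hAbadm.union hDm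
  have hAbad2null : m Abad2 = 0 := measure_union_null hAbadnull hDnull
  set Bad : Set ((ℤ → ℝ) × ℝ) :=
    (⋃ i : ℤ, ((fun q : (ℤ → ℝ) × ℝ => q.1 i) ⁻¹' Abad2)) ∪
      (Prod.snd ⁻¹' (Ioo (0:ℝ) 1)ᶜ) with hBad
  have hBadm : MeasurableSet Bad :=
    (MeasurableSet.iUnion fun i =>
      ((measurable_pi_apply i).comp measurable_fst) hAbad2m).union
      (measurable_snd measurableSet_Ioo.compl)
  have hBadnull : P2 Bad = 0 := by
    refine measure_union_null (measure_iUnion_null fun i => ?_) ?_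
    · have hpre : ((fun q : (ℤ → ℝ) × ℝ => q.1 i) ⁻¹' Abad2)
          = ((fun y : ℤ → ℝ => y i) ⁻¹' Abad2) ×ˢ (univ : Set ℝ) := by
        ext q; simp
      rw [hpre, hP2, Measure.prod_prod]
      have hLv : L ((fun y : ℤ → ℝ => y i) ⁻¹' Abad2) = m Abad2 := by
        rw [← Measure.map_apply (measurable_pi_apply i) hAbad2m, hmarg i]
      rw [hLv, hAbad2null, zero_mul]
    · have hpre : (Prod.snd ⁻¹' (Ioo (0:ℝ) 1)ᶜ : Set ((ℤ → ℝ) × ℝ))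
          = (univ : Set (ℤ → ℝ)) ×ˢ (Ioo (0:ℝ) 1)ᶜ := by
        ext q; simp
      rw [hpre, hP2, Measure.prod_prod]
      have hν0 : ν (Ioo (0:ℝ) 1)ᶜ = 0 := by
        rw [hνdef, unif_apply]
        simp
      rw [hν0, mul_zero]
  have hgoodpt : ∀ q : (ℤ → ℝ) × ℝ, q ∉ Bad →
      (∀ i : ℤ, q.1 i ∉ Abad2) ∧ q.2 ∈ Ioo (0:ℝ) 1 := by
    intro q hq
    rw [hBad] at hq
    simp only [compl_union, mem_union, mem_iUnion, mem_preimage, not_or, not_exists,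
      mem_compl_iff, not_not] at hq
    exact ⟨hq.1, hq.2⟩
  have h3 : μ0 Good = 1 := by
    rw [hμ0, Measure.map_apply hHfm hGoodm]
    refine le_antisymm prob_le_one ?_
    have hcompl : P2 Badᶜ = 1 := by
      rw [measure_compl hBadm (measure_ne_top _ _), hBadnull, measure_univ, tsub_zero]
    have hsub : Badᶜ ⊆ Hf ⁻¹' Good := by
      intro q hq
      obtain ⟨hx, hv⟩ := hgoodpt q hq
      intro i
      exact G_mem_Ioo m (q.1 i) q.2
        (fun h => (hx i) (Or.inl (Or.inl h))) (fun h => (hx i) (Or.inl (Or.inr h)))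
        hv.1 hv.2
    calc (1:ℝ≥0∞) = P2 Badᶜ := hcompl.symm
      _ ≤ P2 (Hf ⁻¹' Good) := measure_mono hsub
  -- (4) marginals
  have h4 : ∀ n : ℤ, μ0.map (fun y => y n) = ν := by
    intro n
    rw [hμ0, Measure.map_map (measurable_pi_apply n) hHfm]
    have hco : ((fun y : ℤ → ℝ => y n) ∘ Hf)
        = (G m) ∘ (Prod.map (fun y : ℤ → ℝ => y n) (id : ℝ → ℝ)) := rfl
    rw [hco, ← Measure.map_map (G_meas m) ((measurable_pi_apply n).prodMap measurable_id),
      hP2, ← Measure.map_prod_map _ _ (measurable_pi_apply n) measurable_id,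
      hmarg n, Measure.map_id]
    exact key m
  -- (5) pushforward by Finv recovers the law of X
  have hFeq : ∀ t, F t = Fc m t := hF
  have hsets : ∀ s : ℝ, {t : ℝ | s ≤ F t} = {t : ℝ | s ≤ Fc m t} := by
    intro s; ext t; simp [hFeq]
  have hFinvmono : ∀ s1 s2 : ℝ, s1 ∈ Ioo (0:ℝ) 1 → s2 ∈ Ioo (0:ℝ) 1 → s1 ≤ s2 →
      Finv s1 ≤ Finv s2 := by
    intro s1 s2 hs1 hs2 h12
    rw [hFinv, hFinv, hsets, hsets]
    exact csInf_le_csInf (Qbdd m hs1.1) (Qne m hs2.2 (hs1.1.trans_le h12).le)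
      (fun t ht => le_trans h12 ht)
  set Finv' : ℝ → ℝ := fun s => if s ∈ Ioo (0:ℝ) 1 then Finv s else 0 with hFinv'
  have hFinv'm : Measurable Finv' := by
    apply measurable_of_Iic
    intro a
    have hK : MeasurableSet {s : ℝ | s ∈ Ioo (0:ℝ) 1 ∧ Finv s ≤ a} := by
      have hOC : OrdConnected {s : ℝ | s ∈ Ioo (0:ℝ) 1 ∧ Finv s ≤ a} := by
        constructor
        intro s1 hs1 s2 hs2 z hz
        have hzIoo : z ∈ Ioo (0:ℝ) 1 :=
          ⟨lt_of_lt_of_le hs1.1.1 hz.1, lt_of_le_of_lt hz.2 hs2.1.2⟩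
        exact ⟨hzIoo, le_trans (hFinvmono z s2 hzIoo hs2.1 hz.2) hs2.2⟩
      exact hOC.measurableSet
    by_cases h0 : (0:ℝ) ≤ a
    · have heq : Finv' ⁻¹' Iic a
          = {s : ℝ | s ∈ Ioo (0:ℝ) 1 ∧ Finv s ≤ a} ∪ (Ioo (0:ℝ) 1)ᶜ := by
        ext s
        simp only [mem_preimage, mem_Iic, hFinv', mem_union, mem_setOf_eq, mem_compl_iff]
        by_cases hs : s ∈ Ioo (0:ℝ) 1 <;> simp [hs, h0]
      rw [heq]
      exact hK.union measurableSet_Ioo.compl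
    · have heq : Finv' ⁻¹' Iic a = {s : ℝ | s ∈ Ioo (0:ℝ) 1 ∧ Finv s ≤ a} := by
        ext s
        simp only [mem_preimage, mem_Iic, hFinv', mem_setOf_eq]
        by_cases hs : s ∈ Ioo (0:ℝ) 1 <;> simp [hs, h0]
      rw [heq]
      exact hK
  set gseq : (ℤ → ℝ) → (ℤ → ℝ) := fun y => fun n : ℤ => Finv' (y n) with hgseq
  have hgseqm : Measurable gseq :=
    measurable_pi_lambda _ fun n => hFinv'm.comp (measurable_pi_apply n)
  have h5 : μ0.map (fun y => fun n : ℤ => Finv (y n)) = L := by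
    have hcongr : (fun y : ℤ → ℝ => fun n : ℤ => Finv (y n)) =ᵐ[μ0] gseq := by
      rw [Filter.EventuallyEq, ae_iff]
      have hGoodc : μ0 Goodᶜ = 0 := by
        rw [measure_compl hGoodm (measure_ne_top _ _), h3, measure_univ, tsub_self]
      refine measure_mono_null (fun y hy => ?_) hGoodc
      simp only [mem_setOf_eq] at hy
      intro hyG
      apply hy
      funext n
      rw [hgseq]
      simp only [hFinv', if_pos (hyG n)]
    rw [Measure.map_congr hcongr, hμ0, Measure.map_map hgseqm hHfm]
    have hae2 : (gseq ∘ Hf) =ᵐ[P2] Prod.fst := by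
      rw [Filter.EventuallyEq, ae_iff]
      refine measure_mono_null (fun q hq => ?_) hBadnull
      simp only [mem_setOf_eq] at hq
      by_contra hqB
      apply hq
      obtain ⟨hx, hv⟩ := hgoodpt q hqB
      funext n
      have hxn := hx n
      have hGIoo : G m (q.1 n, q.2) ∈ Ioo (0:ℝ) 1 :=
        G_mem_Ioo m (q.1 n) q.2
          (fun h => hxn (Or.inl (Or.inl h))) (fun h => hxn (Or.inl (Or.inr h)))
          hv.1 hv.2
      have hstep1 : (gseq ∘ Hf) q n = Finv (G m (q.1 n, q.2)) := by
        simp only [Function.comp_apply, hgseq, hHf, hFinv', if_pos hGIoo]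
      rw [hstep1, hFinv, hsets]
      exact sInf_G_eq m (q.1 n) q.2
        (fun h => hxn (Or.inl (Or.inl h)))
        (fun hsing t ht => hDprop (q.1 n) (fun h => hxn (Or.inr h)) hsing t ht)
        hv.1 hv.2
    rw [Measure.map_congr hae2, hP2, Measure.map_fst_prod, measure_univ, one_smul]
  exact ⟨μ0, h1, h2, h3, h4, h5⟩
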